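/- Let μ, μ' be probability measures on ℤ with gcd of the support of μ equal to d, gcd of the support of μ' equal to d', both supports intersecting ℤ⁺ and ℤ⁻, support of μ bounded above by D with D < d', and support of μ' generating the group d'ℤ. Then for the oscillating walk (jump law μ on negatives, μ' on nonnegatives), any state x ∈ {D, ..., d'−1} + d'ℤ≥0 is transient and its irreducible class is (x + d'ℤ) ∩ [D, ∞). -/

import Mathlib

/-- General oscillating walk (jump support `Sμ` from states `≤ -1`, `Sμ'` from states
`≥ 0`), with both supports meeting ℤ⁺ and ℤ⁻, `d = gcd Sμ`, `d' = gcd Sμ'`, `Sμ`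
bounded above by its maximum `D` with `D < d'`.  Then every
`x ∈ {D,…,d'-1} + d'ℤ₀⁺` is transient (not in an essential class) and its irreducible
class is `(x + d'ℤ) ∩ [D, ∞)`. -/
theorem stmt_16 (Sμ Sμ' : Set ℤ)
    (hμpm : (Sμ ∩ {z | 0 < z}).Nonempty ∧ (Sμ ∩ {z | z < 0}).Nonempty)
    (hμ'pm : (Sμ' ∩ {z | 0 < z}).Nonempty ∧ (Sμ' ∩ {z | z < 0}).Nonempty)
    (d d' : ℤ) (hd : 0 < d) (hd' : 0 < d')
    (hddvd : ∀ s ∈ Sμ, d ∣ s) (hdgen : AddSubgroup.closure Sμ = AddSubgroup.closure {d})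
    (hd'dvd : ∀ s ∈ Sμ', d' ∣ s)
    (hd'gen : AddSubgroup.closure Sμ' = AddSubgroup.closure {d'})
    (D : ℤ) (hD : IsGreatest Sμ D) (hDd' : D < d')
    (step : ℤ → ℤ → Prop)
    (hstep : ∀ x y : ℤ, step x y ↔ ((x ≤ -1 ∧ y - x ∈ Sμ) ∨ (0 ≤ x ∧ y - x ∈ Sμ'))) :
    ∀ x : ℤ, (∃ c m : ℤ, D ≤ c ∧ c ≤ d' - 1 ∧ 0 ≤ m ∧ x = c + d' * m) →
      (∃ y : ℤ, Relation.ReflTransGen step x y ∧ ¬ Relation.ReflTransGen step y x) ∧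
      {y : ℤ | Relation.ReflTransGen step x y ∧ Relation.ReflTransGen step y x}
        = {y : ℤ | d' ∣ y - x ∧ D ≤ y} := by
  obtain ⟨a, haS, hapos⟩ := hμ'pm.1
  obtain ⟨nb, hnbS, hnbneg⟩ := hμ'pm.2
  obtain ⟨p, hpS, hppos⟩ := hμpm.1
  have hapos' : 0 < a := hapos
  have hnbneg' : nb < 0 := hnbneg
  have hppos' : 0 < p := hppos
  have hD1 : (1 : ℤ) ≤ D := le_trans hppos' (hD.2 hpS)
  -- every multiple of d' is a sum of a list of elements of Sμ'
  have hneg : ∀ n ∈ AddSubmonoid.closure Sμ', -n ∈ AddSubmonoid.closure Sμ' := by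
    intro n hn
    induction hn using AddSubmonoid.closure_induction with
    | mem s hs =>
      rcases lt_trichotomy s 0 with hs0 | hs0 | hs0
      · have key : (-s).toNat • a + (a - 1).toNat • s = -s := by
          have h1 : ((-s).toNat : ℤ) = -s := Int.toNat_of_nonneg (by omega)
          have h2 : ((a - 1).toNat : ℤ) = a - 1 := Int.toNat_of_nonneg (by omega)
          have := h1; have := h2
          rw [nsmul_eq_mul, nsmul_eq_mul, h1, h2]; ring
        rw [← key]
        exact add_mem (nsmul_mem (AddSubmonoid.subset_closure haS) _)
          (nsmul_mem (AddSubmonoid.subset_closure hs) _)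
      · rw [hs0, neg_zero]; exact zero_mem _
      · have key : s.toNat • nb + (-nb - 1).toNat • s = -s := by
          have h1 : ((s).toNat : ℤ) = s := Int.toNat_of_nonneg (by omega)
          have h2 : ((-nb - 1).toNat : ℤ) = -nb - 1 := Int.toNat_of_nonneg (by omega)
          rw [nsmul_eq_mul, nsmul_eq_mul, h1, h2]; ring
        rw [← key]
        exact add_mem (nsmul_mem (AddSubmonoid.subset_closure hnbS) _)
          (nsmul_mem (AddSubmonoid.subset_closure hs) _)
    | zero => simpa using (AddSubmonoid.closure Sμ').zero_mem
    | add u v _ _ hu hv => rw [neg_add]; exact add_mem hu hv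
  have hlist : ∀ t : ℤ, d' ∣ t → ∃ l : List ℤ, (∀ s ∈ l, s ∈ Sμ') ∧ l.sum = t := by
    intro t ht
    have hsub : t ∈ AddSubgroup.closure Sμ' := by
      rw [hd'gen]
      rw [AddSubgroup.mem_closure_singleton]
      obtain ⟨k, hk⟩ := ht
      exact ⟨k, by rw [zsmul_eq_mul, hk]; push_cast; ring⟩
    have hmono : t ∈ AddSubmonoid.closure Sμ' := by
      let N : AddSubgroup ℤ :=
        { AddSubmonoid.closure Sμ' with neg_mem' := fun {u} hu => hneg u hu }
      have hle : AddSubgroup.closure Sμ' ≤ N :=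
        (AddSubgroup.closure_le N).2 (fun s hs => AddSubmonoid.subset_closure hs)
      exact hle hsub
    exact AddSubmonoid.exists_list_of_mem_closure hmono
  -- walking up along nonnegative jumps
  have P1 : ∀ l : List ℤ, (∀ s ∈ l, s ∈ Sμ') → (∀ s ∈ l, 0 ≤ s) → ∀ y : ℤ, 0 ≤ y →
      Relation.ReflTransGen step y (y + l.sum) := by
    intro l
    induction l with
    | nil => intro _ _ y _; simpa using Relation.ReflTransGen.refl
    | cons s l ih =>
      intro hmem hpos y hy
      have h1 : step y (y + s) := by
        rw [hstep]
        exact Or.inr ⟨hy, by simpa using hmem s (by simp)⟩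
      have h2 := ih (fun t ht => hmem t (by simp [ht])) (fun t ht => hpos t (by simp [ht]))
        (y + s) (by have := hpos s (by simp); omega)
      have : y + (s :: l).sum = (y + s) + l.sum := by simp [List.sum_cons]; ring
      rw [this]
      exact Relation.ReflTransGen.head h1 h2
  have sum_np : ∀ l : List ℤ, (∀ s ∈ l, s ≤ 0) → l.sum ≤ 0 := by
    intro l
    induction l with
    | nil => simp
    | cons s l ih =>
      intro h
      have h1 := h s (by simp)
      have h2 := ih (fun t ht => h t (by simp [ht]))
      rw [List.sum_cons]; omega
  -- walking down along nonpositive jumps, ending nonnegative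
  have P2 : ∀ l : List ℤ, (∀ s ∈ l, s ∈ Sμ') → (∀ s ∈ l, s ≤ 0) → ∀ y : ℤ, 0 ≤ y →
      0 ≤ y + l.sum → Relation.ReflTransGen step y (y + l.sum) := by
    intro l
    induction l with
    | nil => intro _ _ y _ _; simpa using Relation.ReflTransGen.refl
    | cons s l ih =>
      intro hmem hnp y hy hend
      have hlsum : l.sum ≤ 0 := sum_np l (fun t ht => hnp t (by simp [ht]))
      have h1 : step y (y + s) := by
        rw [hstep]
        exact Or.inr ⟨hy, by simpa using hmem s (by simp)⟩
      have hsum : (s :: l).sum = s + l.sum := List.sum_cons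
      have h2 := ih (fun t ht => hmem t (by simp [ht])) (fun t ht => hnp t (by simp [ht]))
        (y + s) (by rw [hsum] at hend; omega) (by rw [hsum] at hend; omega)
      have : y + (s :: l).sum = (y + s) + l.sum := by simp [List.sum_cons]; ring
      rw [this]
      exact Relation.ReflTransGen.head h1 h2
  intro x hx
  obtain ⟨c, m, hDc, hcd', hm, hxe⟩ := hx
  have hxD : D ≤ x := by nlinarith
  have hx0 : 0 ≤ x := by omega
  -- "Good" states; lower bound lemma
  have hGoodLB : ∀ y : ℤ, 0 ≤ y → d' ∣ y - x → D ≤ y := by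
    intro y hy hdvd
    have hyc : d' ∣ y - c := by
      obtain ⟨k, hk⟩ := hdvd
      exact ⟨k + m, by rw [mul_add]; omega⟩
    by_contra hlt
    push_neg at hlt
    have h1 : y - c ≠ 0 := by omega
    have h2 : -d' < y - c := by omega
    have h3 : y - c < 0 := by omega
    obtain ⟨k, hk⟩ := hyc
    have : k ≠ 0 := by rintro rfl; omega
    rcases lt_trichotomy k 0 with h | h | h
    · nlinarith
    · omega
    · nlinarith
  -- predecessors of good states are good
  have hPred : ∀ y z : ℤ, step y z → (d' ∣ z - x ∧ D ≤ z) → (d' ∣ y - x ∧ D ≤ y) := by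
    intro y z hs hz
    rw [hstep] at hs
    rcases hs with ⟨hy1, hmem⟩ | ⟨hy0, hmem⟩
    · exfalso
      have : z - y ≤ D := hD.2 hmem
      omega
    · have hdz : d' ∣ z - y := hd'dvd _ hmem
      have hdy : d' ∣ y - x := by
        obtain ⟨k1, hk1⟩ := hz.1
        obtain ⟨k2, hk2⟩ := hdz
        exact ⟨k1 - k2, by rw [mul_sub]; omega⟩
      exact ⟨hdy, hGoodLB y hy0 hdy⟩
  have hAbs : ∀ y z : ℤ, Relation.ReflTransGen step y z → (d' ∣ z - x ∧ D ≤ z) →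
      (d' ∣ y - x ∧ D ≤ y) := by
    intro y z h
    induction h with
    | refl => exact id
    | tail h1 h2 ih => exact fun hz => ih (hPred _ _ h2 hz)
  -- mutual reachability of good states
  have hReach : ∀ u v : ℤ, D ≤ u → D ≤ v → d' ∣ v - u →
      Relation.ReflTransGen step u v := by
    intro u v hu hv hdvd
    obtain ⟨l, hlmem, hlsum⟩ := hlist (v - u) hdvd
    set lp := l.filter (fun s => decide (0 ≤ s)) with hlp
    set ln := l.filter (fun s => !decide (0 ≤ s)) with hln
    have hperm : List.Perm (lp ++ ln) l := List.filter_append_perm _ l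
    have hsum : lp.sum + ln.sum = v - u := by
      have := hperm.sum_eq
      rw [List.sum_append] at this
      omega
    have hlpmem : ∀ s ∈ lp, s ∈ Sμ' := fun s hs => hlmem s (List.mem_of_mem_filter hs)
    have hlnmem : ∀ s ∈ ln, s ∈ Sμ' := fun s hs => hlmem s (List.mem_of_mem_filter hs)
    have hlppos : ∀ s ∈ lp, 0 ≤ s := by
      intro s hs
      have := List.of_mem_filter hs
      simpa using this
    have hlnneg : ∀ s ∈ ln, s ≤ 0 := by
      intro s hs
      have := List.of_mem_filter hs
      simp at this
      omega
    have step1 : Relation.ReflTransGen step u (u + lp.sum) :=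
      P1 lp hlpmem hlppos u (by omega)
    have hlpsum : 0 ≤ lp.sum := List.sum_nonneg hlppos
    have step2 : Relation.ReflTransGen step (u + lp.sum) ((u + lp.sum) + ln.sum) :=
      P2 ln hlnmem hlnneg (u + lp.sum) (by omega) (by omega)
    have : (u + lp.sum) + ln.sum = v := by omega
    rw [this] at step2
    exact step1.trans step2
  constructor
  · -- transience: reach a negative state, from which no return
    have hdesc : ∀ n : ℕ, ∀ y : ℤ, y.toNat ≤ n → 0 ≤ y →
        ∃ z : ℤ, z < 0 ∧ Relation.ReflTransGen step y z := by
      intro n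
      induction n with
      | zero =>
        intro y hyn hy
        have hy0 : y = 0 := by omega
        refine ⟨y + nb, by omega, Relation.ReflTransGen.single ?_⟩
        rw [hstep]
        exact Or.inr ⟨hy, by simpa using hnbS⟩
      | succ n ih =>
        intro y hyn hy
        have h1 : step y (y + nb) := by
          rw [hstep]
          exact Or.inr ⟨hy, by simpa using hnbS⟩
        rcases lt_or_ge (y + nb) 0 with h | h
        · exact ⟨y + nb, h, Relation.ReflTransGen.single h1⟩
        · obtain ⟨z, hz1, hz2⟩ := ih (y + nb) (by omega) h
          exact ⟨z, hz1, Relation.ReflTransGen.head h1 hz2⟩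
    obtain ⟨z, hz1, hz2⟩ := hdesc x.toNat x (le_refl _) hx0
    refine ⟨z, hz2, fun hback => ?_⟩
    have := hAbs z x hback ⟨⟨0, by ring⟩, hxD⟩
    omega
  · ext y
    simp only [Set.mem_setOf_eq]
    constructor
    · rintro ⟨hxy, hyx⟩
      exact hAbs y x hyx ⟨⟨0, by ring⟩, hxD⟩
    · rintro ⟨hdvd, hDy⟩
      refine ⟨hReach x y hxD hDy hdvd, hReach y x hDy hxD ?_⟩
      obtain ⟨k, hk⟩ := hdvd
      exact ⟨-k, by rw [mul_neg]; omega⟩
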